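/- Let A ∈ ℝ^{N×N} be stable, C ∈ ℝ^{q×N}, and let X be the unique solution of the Lyapunov equation AᵀX + XA = −CᵀC. Then for every x₀ ∈ ℝ^N, the total output energy of the homogeneous system ẋ = Ax, y = Cx, x(0) = x₀ satisfies ∫₀^∞ ‖C·exp(At)·x₀‖² dt = x₀ᵀ X x₀, where ‖·‖ is the Euclidean norm. -/

import Mathlib

open Matrix MeasureTheory

/-- A real square matrix is stable if every eigenvalue (as a complex matrix)
has negative real part. -/
def Matrix.IsStable {n : Type*} [Fintype n] [DecidableEq n] (A : Matrix n n ℝ) : Prop :=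
  ∀ z ∈ spectrum ℂ (A.map (Complex.ofReal · )), z.re < 0

section Decay

variable {N : ℕ}

/-- Decay of `exp (t • B) *ᵥ v` for a stable complex matrix `B`, for each fixed vector. -/
theorem exp_mulVec_decay (B : Matrix (Fin N) (Fin N) ℂ)
    (hB : ∀ z ∈ spectrum ℂ B, z.re < 0) (v : Fin N → ℂ) :
    ∃ ε : ℝ, 0 < ε ∧ ∃ M : ℝ, 0 ≤ M ∧ ∀ t : ℝ, 0 ≤ t →
      ‖NormedSpace.exp ((t : ℂ) • B) *ᵥ v‖ ≤ M * Real.exp (-ε * t) := by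
  letI : SeminormedRing (Matrix (Fin N) (Fin N) ℂ) := Matrix.linftyOpSemiNormedRing
  letI : NormedRing (Matrix (Fin N) (Fin N) ℂ) := Matrix.linftyOpNormedRing
  letI : NormedAlgebra ℂ (Matrix (Fin N) (Fin N) ℂ) := Matrix.linftyOpNormedAlgebra
  letI : NormedAlgebra ℚ (Matrix (Fin N) (Fin N) ℂ) := NormedAlgebra.restrictScalars ℚ ℂ _
  set f : Module.End ℂ (Fin N → ℂ) := Matrix.toLinAlgEquiv' B with hf
  have htop := Module.End.iSup_maxGenEigenspace_eq_top f
  have hv : v ∈ ⨆ μ : ℂ, f.maxGenEigenspace μ := htop ▸ Submodule.mem_top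
  induction hv using Submodule.iSup_induction' with
  | mem μ w hw =>
      by_cases hw0 : w = 0
      · subst hw0
        exact ⟨1, one_pos, 0, le_refl 0, fun t ht => by simp [Matrix.mulVec_zero]⟩
      obtain ⟨k, hk⟩ := (Module.End.mem_maxGenEigenspace f μ w).mp hw
      have hμB : μ ∈ spectrum ℂ B := by
        rw [← AlgEquiv.spectrum_eq Matrix.toLinAlgEquiv' B,
          ← Module.End.hasEigenvalue_iff_mem_spectrum]
        refine Module.End.hasEigenvalue_of_hasGenEigenvalue (k := k) ?_
        rw [Module.End.hasGenEigenvalue_iff]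
        refine (Submodule.ne_bot_iff _).mpr ⟨w, ?_, hw0⟩
        rw [Module.End.mem_genEigenspace_nat]
        exact hk
      have hre : μ.re < 0 := hB μ hμB
      set ε : ℝ := -μ.re / 2 with hε
      have hεpos : 0 < ε := by rw [hε]; linarith
      set D : Matrix (Fin N) (Fin N) ℂ := B - μ • 1 with hD
      have hfD : ∀ n : ℕ, ((f - μ • 1) ^ n) w = D ^ n *ᵥ w := by
        intro n
        have h1 : f - μ • 1 = Matrix.toLinAlgEquiv' D := by
          rw [hD, map_sub, hf]
          congr 1
          rw [_root_.map_smul, _root_.map_one]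
        rw [h1, ← map_pow, Matrix.toLinAlgEquiv'_apply]
      have hDk : D ^ k *ᵥ w = 0 := by rw [← hfD]; exact hk
      have hDn : ∀ n, k ≤ n → D ^ n *ᵥ w = 0 := by
        intro n hn
        have h1 : D ^ n = D ^ (n - k) * D ^ k := by rw [← pow_add]; congr 1; omega
        rw [h1, ← Matrix.mulVec_mulVec, hDk, Matrix.mulVec_zero]
      refine ⟨ε, hεpos, ∑ j ∈ Finset.range k, ε⁻¹ ^ j * ‖D ^ j *ᵥ w‖, ?_, fun t ht => ?_⟩
      · positivity
      have hsplit : (t : ℂ) • B = ((t : ℂ) * μ) • (1 : Matrix (Fin N) (Fin N) ℂ) + (t : ℂ) • D := by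
        rw [hD, smul_sub, mul_smul]
        abel
      have hcomm : Commute (((t : ℂ) * μ) • (1 : Matrix (Fin N) (Fin N) ℂ)) ((t : ℂ) • D) :=
        ((Commute.one_left _).smul_left _).smul_right _
      have h1 : NormedSpace.exp (((t : ℂ) * μ) • (1 : Matrix (Fin N) (Fin N) ℂ))
          = Complex.exp ((t : ℂ) * μ) • (1 : Matrix (Fin N) (Fin N) ℂ) := by
        calc NormedSpace.exp (((t : ℂ) * μ) • (1 : Matrix (Fin N) (Fin N) ℂ))
            = NormedSpace.exp (algebraMap ℂ (Matrix (Fin N) (Fin N) ℂ) ((t : ℂ) * μ)) := by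
              rw [Algebra.algebraMap_eq_smul_one]
          _ = algebraMap ℂ (Matrix (Fin N) (Fin N) ℂ) (NormedSpace.exp ((t : ℂ) * μ)) :=
              (NormedSpace.algebraMap_exp_comm _).symm
          _ = Complex.exp ((t : ℂ) * μ) • (1 : Matrix (Fin N) (Fin N) ℂ) := by
              rw [← Complex.exp_eq_exp_ℂ, Algebra.algebraMap_eq_smul_one]
      have hexp : NormedSpace.exp ((t : ℂ) • B) *ᵥ w
          = Complex.exp ((t : ℂ) * μ) • (NormedSpace.exp ((t : ℂ) • D) *ᵥ w) := by
        rw [hsplit, Matrix.exp_add_of_commute _ _ hcomm, h1, smul_mul_assoc, one_mul,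
          Matrix.smul_mulVec]
      have hform : NormedSpace.exp ((t : ℂ) • D) *ᵥ w
          = ∑ j ∈ Finset.range k, (((t : ℂ) ^ j * (Nat.factorial j : ℂ)⁻¹)) • (D ^ j *ᵥ w) := by
        let L : Matrix (Fin N) (Fin N) ℂ →ₗ[ℂ] (Fin N → ℂ) :=
          { toFun := fun E => E *ᵥ w
            map_add' := fun E F => Matrix.add_mulVec E F w
            map_smul' := fun c E => Matrix.smul_mulVec c E w }
        have hLc : Continuous L := LinearMap.continuous_of_finiteDimensional L
        have hsum : Summable fun n : ℕ => ((Nat.factorial n : ℂ))⁻¹ • ((t : ℂ) • D) ^ n :=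
          NormedSpace.expSeries_summable' _
        have hL : NormedSpace.exp ((t : ℂ) • D) *ᵥ w
            = ∑' n : ℕ, L (((Nat.factorial n : ℂ))⁻¹ • ((t : ℂ) • D) ^ n) := by
          rw [NormedSpace.exp_eq_tsum ℂ]
          exact ((hsum.hasSum.map L hLc).tsum_eq).symm
        rw [hL, tsum_eq_sum (s := Finset.range k) ?_]
        · refine Finset.sum_congr rfl fun j hj => ?_
          show (((Nat.factorial j : ℂ))⁻¹ • ((t : ℂ) • D) ^ j) *ᵥ w = _
          rw [smul_pow, Matrix.smul_mulVec, Matrix.smul_mulVec, smul_smul,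
            mul_comm ((Nat.factorial j : ℂ))⁻¹]
        · intro n hn
          show (((Nat.factorial n : ℂ))⁻¹ • ((t : ℂ) • D) ^ n) *ᵥ w = 0
          rw [smul_pow, Matrix.smul_mulVec, Matrix.smul_mulVec,
            hDn n (by simpa using hn), smul_zero, smul_zero]
      rw [hexp, hform, norm_smul]
      have habs : ‖Complex.exp ((t : ℂ) * μ)‖ = Real.exp (t * μ.re) := by
        rw [Complex.norm_exp]
        congr 1
        simp [Complex.mul_re]
      rw [habs]
      have hstep : ∀ j ∈ Finset.range k,
          Real.exp (t * μ.re) * ‖((t : ℂ) ^ j * (Nat.factorial j : ℂ)⁻¹) • (D ^ j *ᵥ w)‖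
            ≤ ε⁻¹ ^ j * ‖D ^ j *ᵥ w‖ * Real.exp (-ε * t) := by
        intro j hj
        have hc : ‖((t : ℂ) ^ j * (Nat.factorial j : ℂ)⁻¹)‖ = t ^ j * ((Nat.factorial j : ℝ))⁻¹ := by
          rw [norm_mul, norm_pow, norm_inv, Complex.norm_real, Real.norm_eq_abs,
            abs_of_nonneg ht]
          · norm_num
        have hpow : t ^ j * ((Nat.factorial j : ℝ))⁻¹ ≤ ε⁻¹ ^ j * Real.exp (ε * t) := by
          have h2 : (ε * t) ^ j / (Nat.factorial j : ℝ) ≤ Real.exp (ε * t) := by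
            refine le_trans ?_ (Real.sum_le_exp_of_nonneg (by positivity) (j + 1))
            exact Finset.single_le_sum (f := fun i => (ε * t) ^ i / (Nat.factorial i : ℝ))
              (fun i _ => by positivity) (Finset.self_mem_range_succ j)
          have h3 : t ^ j * ((Nat.factorial j : ℝ))⁻¹ = ε⁻¹ ^ j * ((ε * t) ^ j / (Nat.factorial j : ℝ)) := by
            rw [mul_pow]
            field_simp
            rw [one_div, mul_assoc, ← mul_pow, inv_mul_cancel₀ hεpos.ne', one_pow, mul_one]
          rw [h3]
          gcongr
        have hμε : t * μ.re = -(ε * t) + -(ε * t) := by rw [hε]; ring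
        calc Real.exp (t * μ.re) * ‖((t : ℂ) ^ j * (Nat.factorial j : ℂ)⁻¹) • (D ^ j *ᵥ w)‖
            = Real.exp (t * μ.re) * (t ^ j * ((Nat.factorial j : ℝ))⁻¹) * ‖D ^ j *ᵥ w‖ := by
              rw [norm_smul, hc]; ring
          _ ≤ Real.exp (t * μ.re) * (ε⁻¹ ^ j * Real.exp (ε * t)) * ‖D ^ j *ᵥ w‖ := by
              gcongr
          _ = ε⁻¹ ^ j * ‖D ^ j *ᵥ w‖ * (Real.exp (t * μ.re) * Real.exp (ε * t)) := by ring
          _ = ε⁻¹ ^ j * ‖D ^ j *ᵥ w‖ * Real.exp (-ε * t) := by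
              rw [← Real.exp_add, hμε]
              congr 1
              ring
      calc Real.exp (t * μ.re) * ‖∑ j ∈ Finset.range k, ((t : ℂ) ^ j * (Nat.factorial j : ℂ)⁻¹) • (D ^ j *ᵥ w)‖
          ≤ Real.exp (t * μ.re) * ∑ j ∈ Finset.range k, ‖((t : ℂ) ^ j * (Nat.factorial j : ℂ)⁻¹) • (D ^ j *ᵥ w)‖ := by
            gcongr
            exact norm_sum_le _ _
        _ = ∑ j ∈ Finset.range k, Real.exp (t * μ.re) * ‖((t : ℂ) ^ j * (Nat.factorial j : ℂ)⁻¹) • (D ^ j *ᵥ w)‖ :=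
            Finset.mul_sum _ _ _
        _ ≤ ∑ j ∈ Finset.range k, ε⁻¹ ^ j * ‖D ^ j *ᵥ w‖ * Real.exp (-ε * t) :=
            Finset.sum_le_sum hstep
        _ = (∑ j ∈ Finset.range k, ε⁻¹ ^ j * ‖D ^ j *ᵥ w‖) * Real.exp (-ε * t) := by
            rw [← Finset.sum_mul]
  | zero =>
      exact ⟨1, one_pos, 0, le_refl 0, fun t ht => by
        simp [Matrix.mulVec_zero]⟩
  | add w₁ w₂ hw₁ hw₂ P₁ P₂ =>
      obtain ⟨ε₁, hε₁, M₁, hM₁, h₁⟩ := P₁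
      obtain ⟨ε₂, hε₂, M₂, hM₂, h₂⟩ := P₂
      refine ⟨min ε₁ ε₂, lt_min hε₁ hε₂, M₁ + M₂, by positivity, fun t ht => ?_⟩
      rw [Matrix.mulVec_add]
      calc ‖NormedSpace.exp ((t : ℂ) • B) *ᵥ w₁ + NormedSpace.exp ((t : ℂ) • B) *ᵥ w₂‖
          ≤ ‖NormedSpace.exp ((t : ℂ) • B) *ᵥ w₁‖ + ‖NormedSpace.exp ((t : ℂ) • B) *ᵥ w₂‖ :=
            norm_add_le _ _
        _ ≤ M₁ * Real.exp (-ε₁ * t) + M₂ * Real.exp (-ε₂ * t) :=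
            add_le_add (h₁ t ht) (h₂ t ht)
        _ ≤ M₁ * Real.exp (-(min ε₁ ε₂) * t) + M₂ * Real.exp (-(min ε₁ ε₂) * t) := by
            gcongr <;> [exact min_le_left _ _; exact min_le_right _ _]
        _ = (M₁ + M₂) * Real.exp (-(min ε₁ ε₂) * t) := by ring

end Decay

/-- Transfer the decay estimate to real matrices, entrywise. -/
theorem exp_mulVec_decay_real {N : ℕ} (A : Matrix (Fin N) (Fin N) ℝ) (hA : A.IsStable)
    (x₀ : Fin N → ℝ) :
    ∃ ε : ℝ, 0 < ε ∧ ∃ M : ℝ, 0 ≤ M ∧ ∀ t : ℝ, 0 ≤ t → ∀ i,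
      |(NormedSpace.exp (t • A) *ᵥ x₀) i| ≤ M * Real.exp (-ε * t) := by
  letI : SeminormedRing (Matrix (Fin N) (Fin N) ℝ) := Matrix.linftyOpSemiNormedRing
  letI : NormedRing (Matrix (Fin N) (Fin N) ℝ) := Matrix.linftyOpNormedRing
  letI : NormedAlgebra ℝ (Matrix (Fin N) (Fin N) ℝ) := Matrix.linftyOpNormedAlgebra
  letI : SeminormedRing (Matrix (Fin N) (Fin N) ℂ) := Matrix.linftyOpSemiNormedRing
  letI : NormedRing (Matrix (Fin N) (Fin N) ℂ) := Matrix.linftyOpNormedRing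
  letI : NormedAlgebra ℝ (Matrix (Fin N) (Fin N) ℂ) := Matrix.linftyOpNormedAlgebra
  letI : NormedAlgebra ℂ (Matrix (Fin N) (Fin N) ℂ) := Matrix.linftyOpNormedAlgebra
  letI : NormedAlgebra ℚ (Matrix (Fin N) (Fin N) ℝ) := NormedAlgebra.restrictScalars ℚ ℝ _
  obtain ⟨ε, hε, M, hM, hbound⟩ := exp_mulVec_decay (A.map (Complex.ofReal ·)) hA
      (fun i => (x₀ i : ℂ))
  refine ⟨ε, hε, M, hM, fun t ht i => ?_⟩
  have hcont : Continuous (Complex.ofRealHom.mapMatrix :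
      Matrix (Fin N) (Fin N) ℝ →+* Matrix (Fin N) (Fin N) ℂ) := by
    have : Continuous fun E : Matrix (Fin N) (Fin N) ℝ => E.map (Complex.ofReal ·) :=
      Continuous.matrix_map continuous_id Complex.continuous_ofReal
    exact this
  have h1 : (NormedSpace.exp (t • A)).map (Complex.ofReal ·)
      = NormedSpace.exp ((t • A).map (Complex.ofReal ·)) :=
    NormedSpace.map_exp (Complex.ofRealHom.mapMatrix :
      Matrix (Fin N) (Fin N) ℝ →+* Matrix (Fin N) (Fin N) ℂ) hcont (t • A)
  have h2 : (t • A).map (Complex.ofReal ·) = (t : ℂ) • (A.map (Complex.ofReal ·)) := by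
    ext i j
    simp [Matrix.map_apply]
  have h3 : NormedSpace.exp ((t : ℂ) • (A.map (Complex.ofReal ·)))
      = NormedSpace.exp ((t : ℂ) • (A.map (Complex.ofReal ·))) := by
    rfl
  have hbig : (NormedSpace.exp (t • A)).map (Complex.ofReal ·)
      = NormedSpace.exp ((t : ℂ) • (A.map (Complex.ofReal ·))) := by
    rw [h1, h2, h3]
  have key : (fun i => ((NormedSpace.exp (t • A) *ᵥ x₀) i : ℂ))
      = NormedSpace.exp ((t : ℂ) • (A.map (Complex.ofReal ·))) *ᵥ (fun i => (x₀ i : ℂ)) := by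
    rw [← hbig]
    funext i0
    simp [Matrix.mulVec, dotProduct, Matrix.map_apply]
  calc |(NormedSpace.exp (t • A) *ᵥ x₀) i|
      = ‖(((NormedSpace.exp (t • A) *ᵥ x₀) i : ℝ) : ℂ)‖ := by
        rw [Complex.norm_real, Real.norm_eq_abs]
    _ ≤ ‖(fun i => ((NormedSpace.exp (t • A) *ᵥ x₀) i : ℂ))‖ :=
        norm_le_pi_norm (fun i => ((NormedSpace.exp (t • A) *ᵥ x₀) i : ℂ)) i
    _ = ‖NormedSpace.exp ((t : ℂ) • (A.map (Complex.ofReal ·))) *ᵥ (fun i => (x₀ i : ℂ))‖ := by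
        rw [key]
    _ ≤ M * Real.exp (-ε * t) := hbound t ht


theorem total_output_energy_eq_quadratic_form (N q : ℕ)
    (A : Matrix (Fin N) (Fin N) ℝ) (hA : A.IsStable)
    (C : Matrix (Fin q) (Fin N) ℝ)
    (X : Matrix (Fin N) (Fin N) ℝ)
    (hX : Aᵀ * X + X * A = -(Cᵀ * C)) :
    ∀ x₀ : Fin N → ℝ,
      (∫ t in Set.Ioi (0 : ℝ),
          ∑ i, ((C * NormedSpace.exp (t • A)) *ᵥ x₀) i ^ 2) =
        x₀ ⬝ᵥ (X *ᵥ x₀) := by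
  intro x₀
  letI : SeminormedRing (Matrix (Fin N) (Fin N) ℝ) := Matrix.linftyOpSemiNormedRing
  letI : NormedRing (Matrix (Fin N) (Fin N) ℝ) := Matrix.linftyOpNormedRing
  letI : NormedAlgebra ℝ (Matrix (Fin N) (Fin N) ℝ) := Matrix.linftyOpNormedAlgebra
  obtain ⟨ε, hε, M, hM, hbound⟩ := exp_mulVec_decay_real A hA x₀
  set u : ℝ → (Fin N → ℝ) := fun t => NormedSpace.exp (t • A) *ᵥ x₀ with hu
  set h : ℝ → ℝ := fun t => ∑ i, ((C * NormedSpace.exp (t • A)) *ᵥ x₀) i ^ 2 with hh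
  set φ : ℝ → ℝ := fun t => ∑ i, u t i * ∑ j, X i j * u t j with hφ
  -- the linear map `E ↦ E *ᵥ x₀` as a continuous linear map
  let Lv : Matrix (Fin N) (Fin N) ℝ →ₗ[ℝ] (Fin N → ℝ) :=
    { toFun := fun E => E *ᵥ x₀
      map_add' := fun E F => Matrix.add_mulVec E F x₀
      map_smul' := fun c E => Matrix.smul_mulVec c E x₀ }
  let LvC : Matrix (Fin N) (Fin N) ℝ →L[ℝ] (Fin N → ℝ) :=
    ⟨Lv, LinearMap.continuous_of_finiteDimensional Lv⟩
  -- derivative of each component of u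
  have hu' : ∀ (t : ℝ) (i : Fin N), HasDerivAt (fun s => u s i) ((A *ᵥ u t) i) t := by
    intro t i
    have hE : HasDerivAt (fun s : ℝ => NormedSpace.exp (s • A))
        (A * NormedSpace.exp (t • A)) t := _root_.hasDerivAt_exp_smul_const' A t
    have := ((ContinuousLinearMap.proj i).comp LvC).hasFDerivAt.comp_hasDerivAt t hE
    have h2 : (((ContinuousLinearMap.proj i).comp LvC) (A * NormedSpace.exp (t • A)))
        = (A *ᵥ u t) i := by
      show ((A * NormedSpace.exp (t • A)) *ᵥ x₀) i = (A *ᵥ u t) i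
      rw [← Matrix.mulVec_mulVec]
    exact this.congr_deriv h2
  have hu_cont : ∀ i : Fin N, Continuous fun s => u s i := fun i =>
    continuous_iff_continuousAt.mpr fun t => (hu' t i).continuousAt
  -- h in terms of u
  have hrepr : ∀ t : ℝ, h t = ∑ i, ((C *ᵥ u t) i) ^ 2 := by
    intro t
    rw [hh]
    refine Finset.sum_congr rfl fun i _ => ?_
    rw [← Matrix.mulVec_mulVec]
  -- derivative of φ
  have hφ' : ∀ t : ℝ, HasDerivAt φ (-(h t)) t := by
    intro t
    have hd : HasDerivAt φ
        (∑ i, ((A *ᵥ u t) i * ∑ j, X i j * u t j + u t i * ∑ j, X i j * (A *ᵥ u t) j)) t := by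
      refine HasDerivAt.fun_sum fun i _ => ?_
      exact (hu' t i).mul (HasDerivAt.fun_sum fun j _ => (hu' t j).const_mul (X i j))
    have heq : (∑ i, ((A *ᵥ u t) i * ∑ j, X i j * u t j + u t i * ∑ j, X i j * (A *ᵥ u t) j))
        = -(h t) := by
      have e1 : (∑ i, ((A *ᵥ u t) i * ∑ j, X i j * u t j + u t i * ∑ j, X i j * (A *ᵥ u t) j))
          = (A *ᵥ u t) ⬝ᵥ (X *ᵥ u t) + u t ⬝ᵥ (X *ᵥ (A *ᵥ u t)) := by
        rw [Finset.sum_add_distrib]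
        rfl
      have e2 : (A *ᵥ u t) ⬝ᵥ (X *ᵥ u t) = u t ⬝ᵥ ((Aᵀ * X) *ᵥ u t) := by
        rw [← Matrix.mulVec_mulVec, Matrix.dotProduct_mulVec (v := u t),
          Matrix.vecMul_transpose]
      have e3 : u t ⬝ᵥ (X *ᵥ (A *ᵥ u t)) = u t ⬝ᵥ ((X * A) *ᵥ u t) := by
        rw [Matrix.mulVec_mulVec]
      have e4 : h t = u t ⬝ᵥ ((Cᵀ * C) *ᵥ u t) := by
        rw [hrepr t, ← Matrix.mulVec_mulVec, Matrix.dotProduct_mulVec (v := u t),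
          Matrix.vecMul_transpose]
        simp [dotProduct, sq]
      rw [e1, e2, e3, ← dotProduct_add, ← Matrix.add_mulVec, hX, e4,
        Matrix.neg_mulVec, dotProduct_neg]
    rw [← heq]
    exact hd
  -- nonnegativity and bound for h
  have h_nonneg : ∀ t : ℝ, 0 ≤ h t := fun t =>
    Finset.sum_nonneg fun i _ => sq_nonneg _
  set K : ℝ := ∑ i : Fin q, (∑ j : Fin N, |C i j|) ^ 2 with hK
  have hK0 : 0 ≤ K := Finset.sum_nonneg fun i _ => sq_nonneg _
  have h_bound : ∀ t : ℝ, 0 ≤ t → h t ≤ K * M ^ 2 * Real.exp (-(2 * ε) * t) := by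
    intro t ht
    rw [hrepr t]
    have hci : ∀ i : Fin q, |(C *ᵥ u t) i| ≤ (∑ j : Fin N, |C i j|) * (M * Real.exp (-ε * t)) := by
      intro i
      calc |(C *ᵥ u t) i| = |∑ j, C i j * u t j| := rfl
        _ ≤ ∑ j, |C i j * u t j| := Finset.abs_sum_le_sum_abs _ _
        _ ≤ ∑ j, |C i j| * (M * Real.exp (-ε * t)) := by
            refine Finset.sum_le_sum fun j _ => ?_
            rw [abs_mul]
            exact mul_le_mul_of_nonneg_left (hbound t ht j) (abs_nonneg _)
        _ = (∑ j, |C i j|) * (M * Real.exp (-ε * t)) := by rw [← Finset.sum_mul]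
    calc ∑ i, ((C *ᵥ u t) i) ^ 2 ≤ ∑ i, ((∑ j : Fin N, |C i j|) * (M * Real.exp (-ε * t))) ^ 2 := by
          refine Finset.sum_le_sum fun i _ => ?_
          rw [← sq_abs ((C *ᵥ u t) i)]
          exact pow_le_pow_left₀ (abs_nonneg _) (hci i) 2
      _ = (∑ i : Fin q, (∑ j : Fin N, |C i j|) ^ 2) * (M * Real.exp (-ε * t)) ^ 2 := by
          simp only [mul_pow, ← Finset.sum_mul]
      _ = K * M ^ 2 * Real.exp (-(2 * ε) * t) := by
          rw [hK]
          have hex : Real.exp (-(2 * ε) * t) = Real.exp (-ε * t) * Real.exp (-ε * t) := by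
            rw [← Real.exp_add]; ring_nf
          rw [hex]; ring
  -- integrability of h on Ioi 0
  have h_cont : Continuous h := by
    have : Continuous fun t => ∑ i, ((C *ᵥ u t) i) ^ 2 := by
      refine continuous_finset_sum _ fun i _ => ?_
      have : Continuous fun t => (C *ᵥ u t) i := by
        simp only [Matrix.mulVec, dotProduct]
        exact continuous_finset_sum _ fun j _ => (continuous_const.mul (hu_cont j))
      exact this.pow 2
    have heq : h = fun t => ∑ i, ((C *ᵥ u t) i) ^ 2 := funext hrepr
    rw [heq]
    exact this
  have h_int : IntegrableOn h (Set.Ioi (0 : ℝ)) := by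
    refine Integrable.mono' ((exp_neg_integrableOn_Ioi 0 (by positivity : (0:ℝ) < 2 * ε)).const_mul
      (K * M ^ 2)) h_cont.aestronglyMeasurable ?_
    rw [ae_restrict_iff' measurableSet_Ioi]
    filter_upwards with t ht
    rw [Real.norm_eq_abs, abs_of_nonneg (h_nonneg t)]
    exact h_bound t (le_of_lt ht)
  -- φ tends to 0 at infinity
  have hφ_tendsto : Filter.Tendsto φ Filter.atTop (nhds 0) := by
    set KX : ℝ := ∑ i : Fin N, ∑ j : Fin N, |X i j| with hKX
    have hφb : ∀ t : ℝ, 0 ≤ t → ‖φ t‖ ≤ KX * M ^ 2 * Real.exp (-(2 * ε) * t) := by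
      intro t ht
      rw [Real.norm_eq_abs]
      calc |φ t| ≤ ∑ i, |u t i * ∑ j, X i j * u t j| := Finset.abs_sum_le_sum_abs _ _
        _ ≤ ∑ i, ∑ j, |X i j| * (M * Real.exp (-ε * t)) ^ 2 := by
            refine Finset.sum_le_sum fun i _ => ?_
            rw [abs_mul]
            calc |u t i| * |∑ j, X i j * u t j|
                ≤ (M * Real.exp (-ε * t)) * ∑ j, |X i j| * (M * Real.exp (-ε * t)) := by
                  refine mul_le_mul (hbound t ht i) ?_ (abs_nonneg _) (by positivity)
                  refine le_trans (Finset.abs_sum_le_sum_abs _ _) ?_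
                  refine Finset.sum_le_sum fun j _ => ?_
                  rw [abs_mul]
                  exact mul_le_mul_of_nonneg_left (hbound t ht j) (abs_nonneg _)
              _ = ∑ j, |X i j| * (M * Real.exp (-ε * t)) ^ 2 := by
                  rw [Finset.mul_sum]
                  refine Finset.sum_congr rfl fun j _ => ?_
                  ring
        _ = (∑ i : Fin N, ∑ j : Fin N, |X i j|) * (M * Real.exp (-ε * t)) ^ 2 := by
            simp only [← Finset.sum_mul]
        _ = KX * M ^ 2 * Real.exp (-(2 * ε) * t) := by
            rw [hKX]
            have hex : Real.exp (-(2 * ε) * t) = Real.exp (-ε * t) * Real.exp (-ε * t) := by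
              rw [← Real.exp_add]; ring_nf
            rw [hex]; ring
    have hg : Filter.Tendsto (fun t => KX * M ^ 2 * Real.exp (-(2 * ε) * t))
        Filter.atTop (nhds 0) := by
      rw [show (0:ℝ) = KX * M ^ 2 * 0 by ring]
      refine Filter.Tendsto.const_mul _ ?_
      refine Real.tendsto_exp_atBot.comp ?_
      exact Filter.Tendsto.const_mul_atTop_of_neg (by linarith : -(2 * ε) < 0) Filter.tendsto_id
    refine squeeze_zero_norm' ?_ hg
    filter_upwards [Filter.eventually_ge_atTop (0:ℝ)] with t ht
    exact hφb t ht
  -- fundamental theorem of calculus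
  have hFTC := integral_Ioi_of_hasDerivAt_of_tendsto' (f := φ) (f' := fun t => -(h t)) (a := 0)
    (fun t _ => hφ' t) h_int.neg hφ_tendsto
  have hid : (∫ t in Set.Ioi (0:ℝ), -(h t)) = -(∫ t in Set.Ioi (0:ℝ), h t) := integral_neg h
  rw [hid] at hFTC
  have hmain : (∫ t in Set.Ioi (0:ℝ), h t) = φ 0 := by linarith [hFTC]
  have hφ0 : φ 0 = x₀ ⬝ᵥ (X *ᵥ x₀) := by
    have hu0 : u 0 = x₀ := by
      rw [hu]
      simp [NormedSpace.exp_zero]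
    simp only [hφ, hu0]
    rfl
  rw [← hφ0]
  exact hmain
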